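/- Let (X,d) be a metric space with |X| ≥ 3, T : X → X a generalized Kannan type mapping with λ ∈ [0, 2/3) satisfying T(T(x)) ≠ x whenever Tx ≠ x, and suppose no iterate xₙ (with x₀ ∈ X, xₙ₊₁ = Txₙ) is a fixed point. Then the sequence (xₙ) is a Cauchy sequence. -/
import Mathlib


theorem stmt_6 {X : Type*} [MetricSpace X] (h3 : 3 ≤ Cardinal.mk X) (T : X → X)
    (l : ℝ) (hl0 : 0 ≤ l) (hl : l < 2/3)
    (hGK : ∀ x y z : X, x ≠ y → y ≠ z → x ≠ z →
      dist (T x) (T y) + dist (T y) (T z) + dist (T x) (T z) ≤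
        l * (dist x (T x) + dist y (T y) + dist z (T z)))
    (hi : ∀ x : X, T x ≠ x → T (T x) ≠ x)
    (x : ℕ → X) (hiter : ∀ n, x (n + 1) = T (x n))
    (hnf : ∀ n, T (x n) ≠ x n) :
    CauchySeq x := by
  set a : ℕ → ℝ := fun n => dist (x n) (x (n + 1)) with ha
  have hl1 : (0:ℝ) < 1 - l := by linarith
  set c : ℝ := l / (1 - l) with hc
  have hc0 : 0 ≤ c := div_nonneg hl0 hl1.le
  have hc2 : c < 2 := by
    rw [hc, div_lt_iff₀ hl1]; linarith
  have key : ∀ n, a (n + 1) + a (n + 2) ≤ c * a n := by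
    intro n
    have h01 : x n ≠ x (n + 1) := by rw [hiter n]; exact (hnf n).symm
    have h12 : x (n + 1) ≠ x (n + 2) := by rw [hiter (n + 1)]; exact (hnf (n + 1)).symm
    have h02 : x n ≠ x (n + 2) := by
      rw [hiter (n + 1), hiter n]
      exact (hi (x n) (hnf n)).symm
    have hg := hGK (x n) (x (n + 1)) (x (n + 2)) h01 h12 h02
    have e0 : T (x n) = x (n + 1) := (hiter n).symm
    have e1 : T (x (n + 1)) = x (n + 2) := (hiter (n + 1)).symm
    have e2 : T (x (n + 2)) = x (n + 3) := (hiter (n + 2)).symm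
    rw [e0, e1, e2] at hg
    have hd3 : (0:ℝ) ≤ dist (x (n + 1)) (x (n + 3)) := dist_nonneg
    simp only [ha]
    rw [hc, div_mul_eq_mul_div, le_div_iff₀ hl1]
    nlinarith [hg, hd3]
  -- set up the contraction factor
  set s : ℝ := Real.sqrt (1 + 4 * c) with hs
  have hsq : s ^ 2 = 1 + 4 * c := Real.sq_sqrt (by linarith)
  have hs0 : 0 ≤ s := Real.sqrt_nonneg _
  have hs1 : 1 ≤ s := by nlinarith
  have hs3 : s < 3 := by nlinarith
  set m : ℝ := (s - 1) / 2 with hm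
  have hm0 : 0 ≤ m := by rw [hm]; linarith
  have hm1 : m < 1 := by rw [hm]; linarith
  have hmc : m * (m + 1) = c := by rw [hm]; nlinarith
  have h1m : (0:ℝ) < 1 + m := by linarith
  set β : ℝ := 1 / (1 + m) with hβ
  have hβ0 : 0 ≤ β := by positivity
  have hβe : β * (1 + m) = 1 := by rw [hβ]; field_simp
  have hbm : β * (m * (m + 1)) = m := by linear_combination m * hβe
  have h1b : m * β = 1 - β := by linear_combination hβe
  set b : ℕ → ℝ := fun n => a n + β * a (n + 1) with hb
  have hbstep : ∀ n, b (n + 1) ≤ m * b n := by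
    intro n
    have key' := key n
    rw [← hmc] at key'
    have hmul := mul_le_mul_of_nonneg_left key' hβ0
    have h2 : β * (m * (m + 1) * a n) = m * a n := by linear_combination a n * hbm
    have h3 : m * (β * a (n + 1)) = a (n + 1) - β * a (n + 1) := by
      linear_combination a (n + 1) * h1b
    simp only [hb]
    nlinarith [hmul, h2, h3]
  have hgeo : ∀ n, b n ≤ b 0 * m ^ n := by
    intro n
    induction n with
    | zero => simp
    | succ k ih =>
      calc b (k + 1) ≤ m * b k := hbstep k
        _ ≤ m * (b 0 * m ^ k) := by
            exact mul_le_mul_of_nonneg_left ih hm0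
        _ = b 0 * m ^ (k + 1) := by ring
  apply cauchySeq_of_le_geometric m (b 0) hm1
  intro n
  have h1 : a n ≤ b n := by
    simp only [hb]
    nlinarith [dist_nonneg (x := x (n + 1)) (y := x (n + 2)), hβ0,
      mul_nonneg hβ0 (dist_nonneg (x := x (n + 1)) (y := x (n + 2)))]
  calc dist (x n) (x (n + 1)) = a n := rfl
    _ ≤ b n := h1
    _ ≤ b 0 * m ^ n := hgeo n
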